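/- Let γ < 0, p > 5, and let u ∈ H¹(ℝ) satisfy E_γ(u) = E₀(Q), M(u) = M(Q), P_γ(u) ≥ 0, where Q is the free NLS ground state. Then ‖u'‖_{L²}² − γ|u(0)|² ≤ ‖Q'‖_{L²}², and moreover there exist constants c, C > 0 depending only on p, γ such that c·S₀(Q) ≤ ‖u'‖_{L²}² + ‖u‖_{L²}² − γ|u(0)|² ≤ C·S₀(Q), where S₀(Q) = E₀(Q) + (1/2)M(Q). -/

import Mathlib

open Real MeasureTheory

/-- `∫ |φ'|²`. -/
noncomputable def gradSq (φ : ℝ → ℂ) : ℝ := ∫ x : ℝ, ‖deriv φ x‖ ^ 2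

/-- `∫ |φ|²` (squared `L²` norm, the mass `M(φ)`). -/
noncomputable def l2Sq (φ : ℝ → ℂ) : ℝ := ∫ x : ℝ, ‖φ x‖ ^ 2

/-- `∫ |φ|^{p+1}` (the `L^{p+1}` norm to the power `p+1`). -/
noncomputable def lpP (p : ℝ) (φ : ℝ → ℂ) : ℝ := ∫ x : ℝ, ‖φ x‖ ^ (p + 1)

/-- The energy `E_γ(φ)`. -/
noncomputable def Egam (γ p : ℝ) (φ : ℝ → ℂ) : ℝ :=
  (1 / 2) * gradSq φ - (γ / 2) * ‖φ 0‖ ^ 2 - (1 / (p + 1)) * lpP p φ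

/-- The virial functional `P_γ(φ)`. -/
noncomputable def Pgam (γ p : ℝ) (φ : ℝ → ℂ) : ℝ :=
  gradSq φ - (γ / 2) * ‖φ 0‖ ^ 2 - ((p - 1) / (2 * (p + 1))) * lpP p φ

/-- `‖φ‖_H² = ‖φ'‖_{L²}² - γ|φ(0)|²`. -/
noncomputable def HnormSq (γ : ℝ) (φ : ℝ → ℂ) : ℝ := gradSq φ - γ * ‖φ 0‖ ^ 2

set_option maxHeartbeats 1000000 in
/-- at the threshold, `‖u'‖² − γ|u(0)|² ≤ ‖Q'‖²` and the `H¹`-type quantity of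
`u` is comparable to `S₀(Q) = E₀(Q) + M(Q)/2`. -/
theorem stmt18 (γ p eQ gQ MQ : ℝ) (hγ : γ < 0) (hp : 5 < p) (hMQ : 0 < MQ) (hgQ : 0 < gQ)
    (heQ : eQ = ((p - 5) / (2 * (p - 1))) * gQ ^ 2)
    (heQ2 : eQ = ((p - 5) / (2 * (p + 3))) * MQ)
    (u : ℝ → ℂ) (hE : Egam γ p u = eQ) (hM : l2Sq u = MQ) (hP : 0 ≤ Pgam γ p u) :
    gradSq u - γ * ‖u 0‖ ^ 2 ≤ gQ ^ 2 ∧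
      ∃ c C : ℝ, 0 < c ∧ 0 < C ∧
        c * (eQ + (1 / 2) * MQ) ≤ gradSq u + l2Sq u - γ * ‖u 0‖ ^ 2 ∧
        gradSq u + l2Sq u - γ * ‖u 0‖ ^ 2 ≤ C * (eQ + (1 / 2) * MQ) := by
  have hg0 : 0 ≤ gradSq u := integral_nonneg fun x => by positivity
  have ha0 : (0:ℝ) ≤ ‖u 0‖ ^ 2 := by positivity
  have hp1 : (0:ℝ) < p + 1 := by linarith
  have hp1' : p + 1 ≠ 0 := ne_of_gt hp1
  set g := gradSq u with hgdef
  set a := ‖u 0‖ ^ 2 with hadef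
  set L := lpP p u with hLdef
  unfold Egam at hE
  unfold Pgam at hP
  rw [← hgdef, ← hadef, ← hLdef] at hE hP
  -- solve for L from hE
  have hL : L = (p + 1) * ((1/2) * g - (γ/2) * a - eQ) := by
    field_simp at hE
    field_simp
    linarith
  rw [hL] at hP
  have hPdiv : 0 ≤ g - (γ/2) * a - ((p-1)/2) * ((1/2) * g - (γ/2) * a - eQ) := by
    have : ((p - 1) / (2 * (p + 1))) * ((p + 1) * ((1/2) * g - (γ/2) * a - eQ))
        = ((p-1)/2) * ((1/2) * g - (γ/2) * a - eQ) := by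
      field_simp
    rw [this] at hP
    linarith
  -- key inequality: (p-5)*(g - γ a) ≤ 2*(p-1)*eQ
  have hkey : (p - 5) * (g - γ * a) ≤ 2 * (p - 1) * eQ := by
    nlinarith [mul_nonneg (le_of_lt (neg_pos.mpr hγ)) ha0]
  have hp5 : (0:ℝ) < p - 5 := by linarith
  have h1 : p - 1 ≠ 0 := by intro h; nlinarith
  have h3 : p + 3 ≠ 0 := by intro h; nlinarith
  have h5 : p - 5 ≠ 0 := ne_of_gt hp5
  have hgQ2 : gQ ^ 2 = 2 * (p - 1) * eQ / (p - 5) := by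
    rw [heQ]; field_simp
  have hfirst : g - γ * a ≤ gQ ^ 2 := by
    rw [hgQ2, le_div_iff₀ hp5]
    nlinarith [hkey]
  refine ⟨hfirst, (p + 3)/(p - 1), (2 * p + 2)/(p - 1), ?_, ?_, ?_, ?_⟩
  · apply div_pos <;> linarith
  · apply div_pos <;> linarith
  · -- lower bound: c * S = MQ ≤ g + MQ - γ a
    have hS : (p + 3)/(p - 1) * (eQ + (1/2) * MQ) = MQ := by
      rw [heQ2]; field_simp; ring
    rw [hS, hM]
    nlinarith [mul_nonneg (le_of_lt (neg_pos.mpr hγ)) ha0]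
  · -- upper bound
    have hS : (2 * p + 2)/(p - 1) * (eQ + (1/2) * MQ) = MQ * (2 * p + 2)/(p + 3) := by
      rw [heQ2]; field_simp; ring
    have hgQ2' : gQ ^ 2 = MQ * (p - 1)/(p + 3) := by
      rw [hgQ2, heQ2]; field_simp
    rw [hS, hM]
    have := hfirst
    rw [hgQ2'] at this
    have : g + MQ - γ * a ≤ MQ * (p - 1)/(p + 3) + MQ := by linarith
    calc g + MQ - γ * a ≤ MQ * (p - 1)/(p + 3) + MQ := this
      _ = MQ * (2 * p + 2)/(p + 3) := by field_simp; ring
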